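/- Let P be a natural unit interval order on [n] with incomparability graph G, and let b_i = |{ {j,i} ∈ E(G) : j < i }| for 2 ≤ i ≤ n. Let N_P be the set of permutations of [n] (as words) having no P-descent and no nontrivial left-to-right P-maximum. Then ∑_{σ ∈ N_P} t^{inv_G(σ)} = [n]_t · ∏_{i=2}^n [b_i]_t. -/

import Mathlib

/-- `[k]_t = 1 + t + ⋯ + t^(k-1)`. -/
noncomputable def tnum (R : Type*) [CommSemiring R] (k : ℕ) : Polynomial R :=
  ∑ j ∈ Finset.range k, Polynomial.X ^ j

/-- `[n]_t! = ∏_{i=1}^n [i]_t`. -/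
noncomputable def tfact (R : Type*) [CommSemiring R] (n : ℕ) : Polynomial R :=
  ∏ i ∈ Finset.range n, tnum R (i + 1)

/-- The word `σ(1), σ(2), …, σ(n)` of a permutation, in 0-based positions:
`word n σ i = σ(i+1)` for `i < n` (letters taken in `{1,…,n}`), and `0` otherwise. -/
def word (n : ℕ) (σ : Equiv.Perm (Fin n)) (i : ℕ) : ℕ :=
  if h : i < n then (σ ⟨i, h⟩).1 + 1 else 0

/-- `inv_G(σ)`: the number of pairs of positions `i < j` with `{σ(i), σ(j)}` an edge of the
incomparability graph `G` of `P` (i.e. a `P`-incomparable pair) and `σ(i) > σ(j)`. -/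
def invG (n : ℕ) (ltP : ℕ → ℕ → Prop) [DecidableRel ltP] (σ : Equiv.Perm (Fin n)) : ℕ :=
  ((Finset.range n ×ˢ Finset.range n).filter fun p =>
    p.1 < p.2 ∧ word n σ p.2 < word n σ p.1 ∧
      ¬ ltP (word n σ p.1) (word n σ p.2) ∧ ¬ ltP (word n σ p.2) (word n σ p.1)).card

namespace NP
open Polynomial List

lemma tnum_succ (R : Type*) [CommSemiring R] (k : ℕ) :
    tnum R (k+1) = tnum R k + Polynomial.X ^ k := by
  simp [tnum, Finset.sum_range_succ]

@[simp] lemma tnum_zero (R : Type*) [CommSemiring R] : tnum R 0 = 0 := by simp [tnum]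
@[simp] lemma tnum_one (R : Type*) [CommSemiring R] : tnum R 1 = 1 := by simp [tnum]

section defs
set_option linter.unusedSectionVars false
variable (ltP : ℕ → ℕ → Prop) [DecidableRel ltP]

def Cond : Finset ℕ → ℕ → List ℕ → Prop
  | _, _, [] => True
  | S, c, x :: r => ¬ ltP x c ∧ (S = ∅ ∨ ∃ u ∈ S, ¬ ltP u x) ∧ Cond (insert x S) x r

instance instDecCond : ∀ S c l, Decidable (Cond ltP S c l)
  | _, _, [] => .isTrue trivial
  | S, c, x :: r => by
      have := instDecCond (insert x S) x r
      unfold Cond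
      infer_instance

def invL : List ℕ → ℕ
  | [] => 0
  | x :: r => (r.countP fun z => decide (z < x ∧ ¬ ltP z x)) + invL r

@[simp] lemma cond_nil (S c) : Cond ltP S c [] := trivial

end defs
section deflemmas
set_option linter.unusedSectionVars false
variable {ltP : ℕ → ℕ → Prop} [DecidableRel ltP]

lemma cond_cons {S c x r} : Cond ltP S c (x :: r) ↔
    ¬ ltP x c ∧ (S = ∅ ∨ ∃ u ∈ S, ¬ ltP u x) ∧ Cond ltP (insert x S) x r := Iff.rfl

@[simp] lemma invL_nil : invL ltP [] = 0 := rfl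
lemma invL_cons {x r} : invL ltP (x :: r) =
    (r.countP fun z => decide (z < x ∧ ¬ ltP z x)) + invL ltP r := rfl

lemma chain'_cons' {R : ℕ → ℕ → Prop} {a b : ℕ} {l : List ℕ} :
    List.Chain' R (a :: b :: l) ↔ R a b ∧ List.Chain' R (b :: l) := List.isChain_cons_cons

lemma cond_chain' : ∀ (l : List ℕ) (S : Finset ℕ) (c : ℕ), Cond ltP S c l →
    List.Chain' (fun a b => ¬ ltP b a) (c :: l)
  | [], _, _, _ => by simp [List.Chain']
  | x :: r, S, c, h => by
      rcases h with ⟨h1, _, h3⟩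
      exact chain'_cons'.2 ⟨h1, cond_chain' r (insert x S) x h3⟩

lemma cond_iff_chain' : ∀ (l : List ℕ) (S : Finset ℕ) (c : ℕ),
    (∃ u ∈ S, ∀ v, ¬ ltP u v) →
    (Cond ltP S c l ↔ List.Chain' (fun a b => ¬ ltP b a) (c :: l))
  | [], _, _, _ => by simp [List.Chain']
  | x :: r, S, c, ⟨u, hu, hw⟩ => by
      rw [cond_cons, chain'_cons',
        cond_iff_chain' r (insert x S) x ⟨u, Finset.mem_insert_of_mem hu, hw⟩]
      have hS : S ≠ ∅ → (S = ∅ ∨ ∃ u ∈ S, ¬ ltP u x) := fun _ => Or.inr ⟨u, hu, hw x⟩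
      constructor
      · rintro ⟨a, _, b⟩; exact ⟨a, b⟩
      · rintro ⟨a, b⟩
        exact ⟨a, Or.inr ⟨u, hu, hw x⟩, b⟩
end deflemmas

/-- axioms of a natural unit interval order on `[n]`. -/
structure Ax (ltP : ℕ → ℕ → Prop) (n : ℕ) : Prop where
  mem : ∀ x y, ltP x y → x ∈ Finset.Icc 1 n ∧ y ∈ Finset.Icc 1 n
  trans : ∀ x y z, ltP x y → ltP y z → ltP x z
  nat : ∀ x y, ltP x y → x < y
  nuio : ∀ x y z, x ∈ Finset.Icc 1 n → y ∈ Finset.Icc 1 n → z ∈ Finset.Icc 1 n →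
      y ≠ x → y ≠ z → ltP x z →
      ¬ ltP x y → ¬ ltP y x → ¬ ltP y z → ¬ ltP z y → x < y ∧ y < z

section ax
variable {ltP : ℕ → ℕ → Prop} [DecidableRel ltP] {n : ℕ} (A : Ax ltP n)
include A

lemma not_ltP_zero (x : ℕ) : ¬ ltP x 0 := fun h => by
  have := (A.mem x 0 h).2; simp at this
lemma not_ltP_of_le {x y : ℕ} (h : y ≤ x) : ¬ ltP x y := fun hl => by
  have := A.nat _ _ hl; omega
lemma ltP_le {x y : ℕ} (h : ltP x y) : y ≤ n := by
  have := (A.mem x y h).2; simp at this; omega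
lemma ltP_pos {x y : ℕ} (h : ltP x y) : 1 ≤ x := by
  have := (A.mem x y h).1; simp at this; omega

/-- K3 : an element incomparable with `n` is below nothing. -/
lemma univ_wit {y : ℕ} (hy : ¬ ltP y n) : ∀ c, ¬ ltP y c := by
  intro c hyc
  have hcn : c ≤ n := ltP_le A hyc
  have hyc' : y < c := A.nat _ _ hyc
  rcases eq_or_lt_of_le hcn with rfl | hlt
  · exact hy hyc
  -- c < n
  by_cases hcn' : ltP c n
  · exact hy (A.trans _ _ _ hyc hcn')
  · have hym : y ∈ Finset.Icc 1 n := (A.mem _ _ hyc).1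
    have hcm : c ∈ Finset.Icc 1 n := (A.mem _ _ hyc).2
    have hnm : n ∈ Finset.Icc 1 n := by
      simp only [Finset.mem_Icc] at hym ⊢; omega
    have := A.nuio y n c hym hnm hcm (by omega) (by omega) hyc
      hy (not_ltP_of_le A (by omega)) (not_ltP_of_le A (le_of_lt hlt)) hcn'
    omega

/-- universal witness for `n` itself. -/
lemma univ_wit_n : ∀ c, ¬ ltP n c := by
  intro c hc
  have := A.nat _ _ hc; have := ltP_le A hc; omega

/-- K1 : the set of elements incomparable with `n` is upward closed below `n`. -/
lemma B_up {j j' : ℕ} (hj1 : 1 ≤ j) (hj : ¬ ltP j n) (hjj : j < j') (hj' : ltP j' n) :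
    False := by
  by_cases h1 : ltP j j'
  · exact hj (A.trans _ _ _ h1 hj')
  · have hj'm : j' ∈ Finset.Icc 1 n := (A.mem _ _ hj').1
    have hnm : n ∈ Finset.Icc 1 n := (A.mem _ _ hj').2
    have hj'n : j' < n := A.nat _ _ hj'
    have hjm : j ∈ Finset.Icc 1 n := by
      simp only [Finset.mem_Icc] at hnm ⊢; omega
    have := A.nuio j' j n hj'm hjm hnm (by omega) (by omega) hj'
      (not_ltP_of_le A (by omega)) h1 hj (not_ltP_of_le A (by omega))
    omega
end ax

section fiber
set_option linter.unusedSectionVars false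
variable {ltP : ℕ → ℕ → Prop} [DecidableRel ltP] {n : ℕ}

variable (ltP n) in
def bm (l : List ℕ) : ℕ := l.countP fun z => decide (z < n ∧ ¬ ltP z n)

variable (ltP n) in
def wS (S : Finset ℕ) : Prop := ∃ u ∈ S, ¬ ltP u n

variable (ltP n) in
def headB : List ℕ → Prop
  | [] => True
  | x :: _ => ¬ ltP x n

instance : ∀ l, Decidable (headB ltP n l)
  | [] => .isTrue trivial
  | _ :: _ => instDecidableNot

instance (S : Finset ℕ) : Decidable (wS ltP n S) := by unfold wS; infer_instance

variable (ltP n) in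
noncomputable def E (S : Finset ℕ) (l : List ℕ) : Polynomial ℚ :=
  if wS ltP n S ∨ (S = ∅ ∧ headB ltP n l) then tnum ℚ (bm ltP n l + 1) else tnum ℚ (bm ltP n l)

lemma E_rec (S : Finset ℕ) (y : ℕ) (r : List ℕ) (hy : y < n) :
    (if (S = ∅ ∨ wS ltP n S) ∧ ¬ ltP y n then (X : Polynomial ℚ) ^ (bm ltP n (y :: r)) else 0)
      + E ltP n (insert y S) r = E ltP n S (y :: r) := by
  have hw : wS ltP n (insert y S) ↔ ¬ ltP y n ∨ wS ltP n S := by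
    simp [wS, Finset.mem_insert, or_and_right, exists_or, exists_eq_left]
  have hins : insert y S ≠ ∅ := Finset.insert_ne_empty _ _
  by_cases hB : ltP y n
  · have hbm : bm ltP n (y :: r) = bm ltP n r := by
      simp [bm, List.countP_cons, hB]
    rw [if_neg (fun h => h.2 hB), zero_add]
    simp only [E, headB.eq_2, hbm]
    by_cases h2 : wS ltP n S
    · rw [if_pos (Or.inl (hw.2 (Or.inr h2))), if_pos (Or.inl h2)]
    · rw [if_neg, if_neg]
      · rintro (h | ⟨_, hh⟩)
        · exact h2 h
        · exact hh hB
      · rintro (h | ⟨h, _⟩)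
        · rcases hw.1 h with h | h
          · exact h hB
          · exact h2 h
        · exact hins h
  · have hbm : bm ltP n (y :: r) = bm ltP n r + 1 := by
      simp [bm, List.countP_cons, hB, hy]
    have hw1 : wS ltP n (insert y S) := hw.2 (Or.inl hB)
    simp only [E, headB.eq_2, hbm, if_pos (Or.inl hw1)]
    by_cases h2 : S = ∅ ∨ wS ltP n S
    · rw [if_pos ⟨h2, hB⟩, if_pos (by tauto)]
      rw [tnum_succ ℚ (bm ltP n r + 1)]
      ring
    · rw [if_neg (by tauto), zero_add, if_neg (by tauto)]
end fiber

section fiberlemma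
set_option linter.unusedSectionVars false
variable {ltP : ℕ → ℕ → Prop} [DecidableRel ltP] {n : ℕ}

lemma perm_of_mem_aux {ρ : List ℕ} {t : ℕ} {l : List ℕ} (h : ρ ∈ permutations'Aux t l) :
    ρ ~ t :: l := by
  have : ρ ∈ permutations' (t :: l) := by
    simp only [permutations']
    exact List.mem_flatMap.2 ⟨l, mem_permutations'.2 (List.Perm.refl l), h⟩
  exact mem_permutations'.1 this

lemma sum_map_mul_left' {α : Type*} (l : List α) (f : α → Polynomial ℚ) (a : Polynomial ℚ) :
    (l.map fun x => a * f x).sum = a * (l.map f).sum := by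
  induction l with
  | nil => simp
  | cons x r ih => simp [ih, mul_add]

lemma fiber (A : Ax ltP n) (ys : List ℕ) : ∀ (S : Finset ℕ) (c : ℕ),
    (∀ y ∈ ys, 1 ≤ y ∧ y < n) → (∀ u ∈ S, 1 ≤ u ∧ u < n) → ((c = 0 ∧ S = ∅) ∨ c ∈ S) →
    ((permutations'Aux n ys).map
        (fun ρ => if Cond ltP S c ρ then (X : Polynomial ℚ) ^ invL ltP ρ else 0)).sum
      = if Cond ltP S c ys then (X : Polynomial ℚ) ^ invL ltP ys * E ltP n S ys else 0 := by
  induction ys with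
  | nil =>
      intro S c hys hS hc
      have hnc : ¬ ltP n c := by
        rcases hc with ⟨rfl, _⟩ | hc
        · exact not_ltP_zero A n
        · exact fun h => absurd (A.nat _ _ h) (by have := (hS c hc).2; omega)
      simp only [permutations'Aux, List.map_cons, List.map_nil, List.sum_cons, List.sum_nil,
        add_zero]
      rw [if_pos (cond_nil ltP S c)]
      have h1 : invL ltP [n] = 0 := by simp [invL_cons]
      have hCn : Cond ltP S c [n] ↔ (S = ∅ ∨ wS ltP n S) := by
        rw [cond_cons]
        unfold wS
        simp [hnc]
      simp only [h1, invL_nil, pow_zero, one_mul]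
      unfold E headB bm
      simp only [List.countP_nil]
      by_cases h : S = ∅ ∨ wS ltP n S
      · rw [if_pos (hCn.2 h), if_pos (by tauto), tnum_one]
      · rw [if_neg (fun hh => h (hCn.1 hh)), if_neg (by tauto), tnum_zero]
  | cons y r IH =>
      intro S c hys hS hc
      obtain ⟨hy1, hyn⟩ := hys y ((List.mem_cons_self (a := y) (l := r)))
      have hrn : ∀ z ∈ r, 1 ≤ z ∧ z < n := fun z hz => hys z (List.mem_cons_of_mem _ hz)
      simp only [permutations'Aux, List.map_cons, List.sum_cons, List.map_map]
      by_cases Hhead : ¬ ltP y c ∧ (S = ∅ ∨ ∃ u ∈ S, ¬ ltP u y)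
      · obtain ⟨hyc, hwit⟩ := Hhead
        have hS1mem : ∀ u ∈ insert y S, 1 ≤ u ∧ u < n := by
          intro u hu
          rcases Finset.mem_insert.1 hu with rfl | hu
          · exact ⟨hy1, hyn⟩
          · exact hS u hu
        have huy : ∀ v, ¬ ltP y v → True := fun _ _ => trivial
        have hmapeq : ((permutations'Aux n r).map
            ((fun ρ => if Cond ltP S c ρ then (X : Polynomial ℚ) ^ invL ltP ρ else 0) ∘
              (List.cons y))).sum
            = ((permutations'Aux n r).map (fun ρ' => (X : Polynomial ℚ) ^
                (r.countP fun z => decide (z < y ∧ ¬ ltP z y)) *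
                (if Cond ltP (insert y S) y ρ' then (X : Polynomial ℚ) ^ invL ltP ρ' else 0))).sum := by
          refine congrArg _ (List.map_congr_left ?_)
          intro ρ' hρ'
          have hperm : ρ' ~ n :: r := perm_of_mem_aux hρ'
          have hcnt : (ρ'.countP fun z => decide (z < y ∧ ¬ ltP z y))
              = r.countP fun z => decide (z < y ∧ ¬ ltP z y) := by
            rw [hperm.countP_eq]
            rw [List.countP_cons]
            simp [show ¬ (n < y) by omega]
          simp only [Function.comp_apply]
          by_cases hC : Cond ltP (insert y S) y ρ'
          · rw [if_pos (cond_cons.2 ⟨hyc, hwit, hC⟩), if_pos hC, invL_cons, hcnt, pow_add]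
          · rw [if_neg (fun hh => hC (cond_cons.1 hh).2.2), if_neg hC, mul_zero]
        rw [hmapeq, sum_map_mul_left',
          IH (insert y S) y hrn hS1mem (Or.inr (Finset.mem_insert_self y S))]
        have hT0iff : Cond ltP S c (n :: y :: r) ↔
            (S = ∅ ∨ wS ltP n S) ∧ ¬ ltP y n ∧ Cond ltP (insert y S) y r := by
          rw [cond_cons]
          constructor
          · rintro ⟨_, h2, h3⟩
            rcases cond_cons.1 h3 with ⟨hyn', _, h4⟩
            refine ⟨h2, hyn', ?_⟩
            have hchain := (cond_iff_chain' r _ y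
              ⟨y, Finset.mem_insert_self _ _, univ_wit A hyn'⟩).1 h4
            exact (cond_iff_chain' r _ y
              ⟨y, Finset.mem_insert_self _ _, univ_wit A hyn'⟩).2 hchain
          · rintro ⟨h2, hyn', hc1⟩
            refine ⟨univ_wit_n A c, h2, ?_⟩
            rw [cond_cons]
            refine ⟨hyn', Or.inr ⟨n, Finset.mem_insert_self _ _, univ_wit_n A y⟩, ?_⟩
            have hchain := (cond_iff_chain' r _ y
              ⟨y, Finset.mem_insert_self _ _, univ_wit A hyn'⟩).1 hc1
            exact (cond_iff_chain' r _ y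
              ⟨y, Finset.mem_insert_self _ _, univ_wit A hyn'⟩).2 hchain
        by_cases hC : Cond ltP (insert y S) y r
        · rw [if_pos hC, if_pos (cond_cons.2 ⟨hyc, hwit, hC⟩)]
          have hiff2 : Cond ltP S c (n :: y :: r) ↔ ((S = ∅ ∨ wS ltP n S) ∧ ¬ ltP y n) := by
            rw [hT0iff]
            exact ⟨fun h => ⟨h.1, h.2.1⟩, fun h => ⟨h.1, h.2, hC⟩⟩
          have e1 : invL ltP (n :: y :: r) = bm ltP n (y :: r) + invL ltP (y :: r) := by
            rw [invL_cons]
            rfl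
          have hT0 : (if Cond ltP S c (n :: y :: r) then (X : Polynomial ℚ) ^
              invL ltP (n :: y :: r) else 0)
              = (if (S = ∅ ∨ wS ltP n S) ∧ ¬ ltP y n then
                  (X : Polynomial ℚ) ^ (bm ltP n (y :: r) + invL ltP (y :: r)) else 0) := by
            rw [e1]
            exact if_congr hiff2 rfl rfl
          rw [hT0, ← E_rec S y r hyn, invL_cons]
          split_ifs with h <;> ring
        · rw [if_neg (fun hh => hC (hT0iff.1 hh).2.2), if_neg hC,
            if_neg (fun hh => hC (cond_cons.1 hh).2.2)]
          simp
      · have hT0 : ¬ Cond ltP S c (n :: y :: r) := by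
          rintro ⟨_, h2, h3⟩
          rcases cond_cons.1 h3 with ⟨hyn', _, _⟩
          apply Hhead
          constructor
          · exact univ_wit A hyn' c
          · rcases h2 with h2 | ⟨u, hu, hun⟩
            · exact Or.inl h2
            · exact Or.inr ⟨u, hu, univ_wit A hun y⟩
        rw [if_neg hT0, if_neg (fun hh => Hhead ⟨(cond_cons.1 hh).1, (cond_cons.1 hh).2.1⟩)]
        rw [List.sum_eq_zero]
        · simp
        · intro x hx
          simp only [List.mem_map, Function.comp_apply] at hx
          obtain ⟨ρ', _, rfl⟩ := hx
          rw [if_neg (fun hh => Hhead ⟨(cond_cons.1 hh).1, (cond_cons.1 hh).2.1⟩)]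
end fiberlemma

section helpers
set_option linter.unusedSectionVars false

lemma sum_map_flatMap {α β : Type*} (L : List α) (g : α → List β) (f : β → Polynomial ℚ) :
    (((L.flatMap g)).map f).sum = (L.map (fun τ => ((g τ).map f).sum)).sum := by
  induction L with
  | nil => simp
  | cons x r ih => simp [List.flatMap_cons, ih]

lemma list_sum_finset_sum {α β : Type*} (l : List α) (s : Finset β)
    (h : β → α → Polynomial ℚ) :
    (l.map (fun τ => ∑ a ∈ s, h a τ)).sum = ∑ a ∈ s, (l.map (h a)).sum := by
  induction l with
  | nil => simp
  | cons x r ih => simp [ih, Finset.sum_add_distrib]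

lemma countP_range' (p : ℕ → Bool) : ∀ m : ℕ,
    (List.range' 1 m).countP p = ((Finset.Ico 1 (m+1)).filter (fun j => p j = true)).card
  | 0 => by simp
  | m+1 => by
      rw [List.range'_concat, List.countP_append, countP_range' p m]
      have h1 : Finset.Ico 1 (m+1+1) = insert (m+1) (Finset.Ico 1 (m+1)) := by
        ext j
        simp only [Finset.mem_Ico, Finset.mem_insert]
        omega
      have h2 : (1 : ℕ) + 1 * m = m + 1 := by ring
      rw [h1, Finset.filter_insert, h2]
      by_cases h : p (m+1) = true
      · rw [if_pos h, Finset.card_insert_of_notMem (by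
          simp only [Finset.mem_filter, Finset.mem_Ico]
          omega)]
        simp [h, List.countP_cons]
      · rw [if_neg h]
        simp only [List.countP_cons, List.countP_nil]
        simp [h]

variable {ltP : ℕ → ℕ → Prop} [DecidableRel ltP] {n : ℕ}

lemma card_B_le (hn : 1 ≤ n) :
    ((Finset.Ico 1 n).filter (fun j => ¬ ltP j n)).card ≤ n - 1 := by
  have := Finset.card_filter_le (Finset.Ico 1 n) (fun j => ¬ ltP j n)
  simpa [Nat.card_Ico] using this

lemma Bsum (A : Ax ltP n) (hn : 1 ≤ n) :
    ∑ a ∈ (Finset.Ico 1 n).filter (fun j => ¬ ltP j n), (X : Polynomial ℚ) ^ (a - 1)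
      = X ^ (n - 1 - ((Finset.Ico 1 n).filter (fun j => ¬ ltP j n)).card) *
        tnum ℚ ((Finset.Ico 1 n).filter (fun j => ¬ ltP j n)).card := by
  set BF := (Finset.Ico 1 n).filter (fun j => ¬ ltP j n) with hBF
  by_cases hb : BF = ∅
  · rw [hb]
    simp
  · have hne : BF.Nonempty := Finset.nonempty_iff_ne_empty.2 hb
    set j0 := BF.min' hne with hj0def
    have hj0 : j0 ∈ BF := Finset.min'_mem _ _
    have hj0m : (1 ≤ j0 ∧ j0 < n) ∧ ¬ ltP j0 n := by
      simpa [hBF, Finset.mem_filter, Finset.mem_Ico] using hj0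
    have hEq : BF = Finset.Ico j0 n := by
      ext j
      simp only [hBF, Finset.mem_filter, Finset.mem_Ico]
      constructor
      · rintro ⟨⟨h1, h2⟩, h3⟩
        exact ⟨Finset.min'_le _ _ (by simp [hBF, Finset.mem_filter, Finset.mem_Ico]; tauto), h2⟩
      · rintro ⟨h1, h2⟩
        refine ⟨⟨le_trans hj0m.1.1 h1, h2⟩, fun hj => ?_⟩
        rcases eq_or_lt_of_le h1 with rfl | hlt
        · exact hj0m.2 hj
        · exact B_up A hj0m.1.1 hj0m.2 hlt hj
    rw [hEq, Nat.card_Ico, Finset.sum_Ico_eq_sum_range]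
    have he : n - 1 - (n - j0) = j0 - 1 := by omega
    rw [he]
    rw [tnum, Finset.mul_sum]
    apply Finset.sum_congr rfl
    intro k _
    rw [← pow_add]
    congr 1
    omega

/-- restriction of `ltP` to `[1, n-1]`. -/
def res (ltP : ℕ → ℕ → Prop) (n : ℕ) : ℕ → ℕ → Prop := fun x y => ltP x y ∧ y ≠ n

instance : DecidableRel (res ltP n) := fun _ _ => instDecidableAnd

lemma Ax_res (A : Ax ltP (n+1)) : Ax (res ltP (n+1)) n where
  mem x y h := by
    have h1 := A.mem x y h.1
    have h2 := A.nat x y h.1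
    simp only [Finset.mem_Icc] at h1 ⊢
    have := h.2
    omega
  trans x y z h1 h2 := ⟨A.trans x y z h1.1 h2.1, h2.2⟩
  nat x y h := A.nat x y h.1
  nuio x y z hx hy hz hyx hyz hxz hxy' hyx' hyz' hzy' := by
    simp only [Finset.mem_Icc] at hx hy hz
    have hres : ∀ u v : ℕ, v ≤ n → (¬ res ltP (n+1) u v → ¬ ltP u v) := by
      intro u v hv h hl
      exact h ⟨hl, by omega⟩
    exact A.nuio x y z (by simp only [Finset.mem_Icc]; omega)
      (by simp only [Finset.mem_Icc]; omega) (by simp only [Finset.mem_Icc]; omega)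
      hyx hyz hxz.1 (hres x y (by omega) hxy') (hres y x (by omega) hyx')
      (hres y z (by omega) hyz') (hres z y (by omega) hzy')

lemma cond_res : ∀ (l : List ℕ) (S : Finset ℕ) (c : ℕ), n ∉ l → c ≠ n →
    (Cond (res ltP n) S c l ↔ Cond ltP S c l)
  | [], _, _, _, _ => by simp
  | x :: r, S, c, hl, hc => by
      have hx : x ≠ n := fun e => hl (e ▸ (List.mem_cons_self (a := x) (l := r)))
      rw [cond_cons, cond_cons,
        cond_res r (insert x S) x (fun hh => hl (List.mem_cons_of_mem _ hh)) hx]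
      simp only [res]
      constructor
      · rintro ⟨h1, h2, h3⟩
        refine ⟨fun hh => h1 ⟨hh, hc⟩, ?_, h3⟩
        rcases h2 with h2 | ⟨u, hu, hux⟩
        · exact Or.inl h2
        · exact Or.inr ⟨u, hu, fun hh => hux ⟨hh, hx⟩⟩
      · rintro ⟨h1, h2, h3⟩
        refine ⟨fun hh => h1 hh.1, ?_, h3⟩
        rcases h2 with h2 | ⟨u, hu, hux⟩
        · exact Or.inl h2
        · exact Or.inr ⟨u, hu, fun hh => hux hh.1⟩

lemma invL_res : ∀ (l : List ℕ), n ∉ l → invL (res ltP n) l = invL ltP l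
  | [], _ => rfl
  | x :: r, hl => by
      have hx : x ≠ n := fun e => hl (e ▸ (List.mem_cons_self (a := x) (l := r)))
      rw [invL_cons, invL_cons, invL_res r (fun hh => hl (List.mem_cons_of_mem _ hh))]
      congr 1
      apply List.countP_congr
      intro z _
      rw [decide_eq_true_eq, decide_eq_true_eq]
      simp only [res]
      constructor
      · rintro ⟨h1, h2⟩
        exact ⟨h1, fun hh => h2 ⟨hh, hx⟩⟩
      · rintro ⟨h1, h2⟩
        exact ⟨h1, fun hh => h2 hh.1⟩

noncomputable def fa (ltP : ℕ → ℕ → Prop) [DecidableRel ltP] (a : ℕ) (l : List ℕ) :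
    Polynomial ℚ :=
  if l.head? = some a ∧ Cond ltP ∅ 0 l then X ^ invL ltP l else 0

lemma fa_res (hn : n ≠ 0) (a : ℕ) (l : List ℕ) (hl : n ∉ l) :
    fa (res ltP n) a l = fa ltP a l := by
  unfold fa
  rw [invL_res l hl]
  exact if_congr (and_congr Iff.rfl (cond_res l ∅ 0 hl (fun h => hn h.symm))) rfl rfl

end helpers

section inner
set_option linter.unusedSectionVars false
variable {ltP : ℕ → ℕ → Prop} [DecidableRel ltP] {n : ℕ}

lemma inner_top (A : Ax ltP n) (τ : List ℕ)
    (hτ : ∀ z ∈ τ, 1 ≤ z ∧ z < n) (hne : τ ≠ []) :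
    ((permutations'Aux n τ).map (fa ltP n)).sum
      = (X : Polynomial ℚ) ^ (bm ltP n τ) *
        ∑ a' ∈ (Finset.Ico 1 n).filter (fun j => ¬ ltP j n), fa ltP a' τ := by
  obtain ⟨y, r, rfl⟩ := List.exists_cons_of_ne_nil hne
  obtain ⟨hy1, hyn⟩ := hτ y ((List.mem_cons_self (a := y) (l := r)))
  simp only [permutations'Aux, List.map_cons, List.sum_cons, List.map_map]
  have hzero : ∀ ρ' ∈ permutations'Aux n r, ((fa ltP n) ∘ (List.cons y)) ρ' = 0 := by
    intro ρ' _
    simp only [Function.comp_apply]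
    unfold fa
    rw [if_neg]
    rintro ⟨h1, -⟩
    rw [List.head?_cons, Option.some_inj] at h1
    omega
  rw [List.map_congr_left hzero]
  have hsum0 : (List.map (fun _ => (0 : Polynomial ℚ)) (permutations'Aux n r)).sum = 0 := by
    simp
  rw [hsum0, add_zero]
  have hCiff : Cond ltP ∅ 0 (n :: y :: r) ↔ (¬ ltP y n ∧ Cond ltP ∅ 0 (y :: r)) := by
    rw [cond_cons]
    have hun : Cond ltP (insert n ∅) n (y :: r) ↔
        List.Chain' (fun a b => ¬ ltP b a) (n :: y :: r) := by
      have := cond_iff_chain' (ltP := ltP) (y :: r) (insert n ∅) n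
        ⟨n, Finset.mem_insert_self _ _, univ_wit_n A⟩
      exact this
    rw [hun, chain'_cons']
    constructor
    · rintro ⟨-, -, hyn', hch⟩
      refine ⟨hyn', ?_⟩
      rw [cond_cons]
      refine ⟨not_ltP_zero A y, Or.inl rfl, ?_⟩
      exact (cond_iff_chain' r (insert y ∅) y
        ⟨y, Finset.mem_insert_self _ _, univ_wit A hyn'⟩).2 hch
    · rintro ⟨hyn', hcy⟩
      have hch := (cond_iff_chain' r (insert y ∅) y
        ⟨y, Finset.mem_insert_self _ _, univ_wit A hyn'⟩).1 (cond_cons.1 hcy).2.2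
      exact ⟨not_ltP_zero A n, Or.inl rfl, hyn', hch⟩
  have hfan : fa ltP n (n :: y :: r)
      = if (¬ ltP y n ∧ Cond ltP ∅ 0 (y :: r)) then
          (X : Polynomial ℚ) ^ (bm ltP n (y :: r) + invL ltP (y :: r)) else 0 := by
    unfold fa
    have he : invL ltP (n :: y :: r) = bm ltP n (y :: r) + invL ltP (y :: r) := by
      rw [invL_cons]
      rfl
    rw [he]
    refine if_congr ?_ rfl rfl
    rw [List.head?_cons]
    simp only [Option.some_inj, eq_self_iff_true, true_and]
    exact hCiff
  rw [hfan]
  by_cases hc : Cond ltP ∅ 0 (y :: r)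
  · have hsum : ∑ a' ∈ (Finset.Ico 1 n).filter (fun j => ¬ ltP j n), fa ltP a' (y :: r)
        = if y ∈ (Finset.Ico 1 n).filter (fun j => ¬ ltP j n) then
            (X : Polynomial ℚ) ^ invL ltP (y :: r) else 0 := by
      rw [← Finset.sum_ite_eq' ((Finset.Ico 1 n).filter (fun j => ¬ ltP j n)) y
        (fun _ => (X : Polynomial ℚ) ^ invL ltP (y :: r))]
      apply Finset.sum_congr rfl
      intro a' _
      unfold fa
      rw [List.head?_cons]
      by_cases h : a' = y
      · subst h
        rw [if_pos rfl, if_pos ⟨rfl, hc⟩]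
      · rw [if_neg h, if_neg]
        rintro ⟨h1, -⟩
        exact h (Option.some_inj.1 h1).symm
    rw [hsum]
    have hymem : y ∈ (Finset.Ico 1 n).filter (fun j => ¬ ltP j n) ↔ ¬ ltP y n := by
      simp only [Finset.mem_filter, Finset.mem_Ico]
      constructor
      · tauto
      · intro h
        exact ⟨⟨hy1, hyn⟩, h⟩
    by_cases hB : ltP y n
    · rw [if_neg (fun hh => hh.1 hB), if_neg (fun hh => (hymem.1 hh) hB), mul_zero]
    · rw [if_pos ⟨hB, hc⟩, if_pos (hymem.2 hB), pow_add]
  · have hall : ∀ a' ∈ (Finset.Ico 1 n).filter (fun j => ¬ ltP j n),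
        fa ltP a' (y :: r) = 0 := by
      intro a' _
      unfold fa
      rw [if_neg]
      rintro ⟨-, h2⟩
      exact hc h2
    rw [Finset.sum_eq_zero hall, if_neg (fun hh => hc hh.2), mul_zero]

lemma inner_low (A : Ax ltP n) (a : ℕ) (ha1 : 1 ≤ a) (han : a < n) (τ : List ℕ)
    (hτ : ∀ z ∈ τ, 1 ≤ z ∧ z < n) (hne : τ ≠ []) :
    ((permutations'Aux n τ).map (fa ltP a)).sum = tnum ℚ (bm ltP n τ) * fa ltP a τ := by
  obtain ⟨y, r, rfl⟩ := List.exists_cons_of_ne_nil hne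
  obtain ⟨hy1, hyn⟩ := hτ y ((List.mem_cons_self (a := y) (l := r)))
  have hrτ : ∀ z ∈ r, 1 ≤ z ∧ z < n := fun z hz => hτ z (List.mem_cons_of_mem _ hz)
  simp only [permutations'Aux, List.map_cons, List.sum_cons, List.map_map]
  have h0 : fa ltP a (n :: y :: r) = 0 := by
    unfold fa
    rw [if_neg]
    rintro ⟨h1, -⟩
    rw [List.head?_cons, Option.some_inj] at h1
    omega
  rw [h0, zero_add]
  by_cases hya : y = a
  · subst hya
    have hCiff : ∀ l : List ℕ, (Cond ltP ∅ 0 (y :: l) ↔ Cond ltP (insert y ∅) y l) := by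
      intro l
      rw [cond_cons]
      constructor
      · rintro ⟨-, -, h⟩
        exact h
      · intro h
        exact ⟨not_ltP_zero A y, Or.inl rfl, h⟩
    have hmc : ∀ ρ' ∈ permutations'Aux n r,
        ((fa ltP y) ∘ (List.cons y)) ρ'
          = (X : Polynomial ℚ) ^ (r.countP fun z => decide (z < y ∧ ¬ ltP z y)) *
            (if Cond ltP (insert y ∅) y ρ' then (X : Polynomial ℚ) ^ invL ltP ρ' else 0) := by
      intro ρ' hρ'
      have hperm := perm_of_mem_aux hρ'
      have hcnt : (ρ'.countP fun z => decide (z < y ∧ ¬ ltP z y))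
          = r.countP fun z => decide (z < y ∧ ¬ ltP z y) := by
        rw [hperm.countP_eq, List.countP_cons]
        simp [show ¬ (n < y) by omega]
      simp only [Function.comp_apply]
      unfold fa
      rw [List.head?_cons]
      by_cases hC : Cond ltP (insert y ∅) y ρ'
      · rw [if_pos ⟨rfl, (hCiff ρ').2 hC⟩, if_pos hC, invL_cons, hcnt, pow_add]
      · rw [if_neg (fun hh => hC ((hCiff ρ').1 hh.2)), if_neg hC, mul_zero]
    rw [List.map_congr_left hmc, sum_map_mul_left',
      fiber A r (insert y ∅) y hrτ
        (fun u hu => by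
          rcases Finset.mem_insert.1 hu with rfl | hu
          · exact ⟨hy1, hyn⟩
          · simp at hu)
        (Or.inr (Finset.mem_insert_self _ _))]
    have hE : E ltP n (insert y ∅) r = tnum ℚ (bm ltP n (y :: r)) := by
      unfold E
      have hw : wS ltP n (insert y ∅) ↔ ¬ ltP y n := by
        simp [wS]
      have hins : (insert y ∅ : Finset ℕ) ≠ ∅ := Finset.insert_ne_empty _ _
      by_cases hB : ltP y n
      · have hbm : bm ltP n (y :: r) = bm ltP n r := by
          simp [bm, List.countP_cons, hB]
        rw [hbm, if_neg]
        rintro (h | ⟨h, -⟩)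
        · exact (hw.1 h) hB
        · exact hins h
      · have hbm : bm ltP n (y :: r) = bm ltP n r + 1 := by
          simp [bm, List.countP_cons, hB, hyn]
        rw [hbm, if_pos (Or.inl (hw.2 hB))]
    have hfa : fa ltP y (y :: r)
        = if Cond ltP (insert y ∅) y r then (X : Polynomial ℚ) ^ invL ltP (y :: r) else 0 := by
      unfold fa
      rw [List.head?_cons]
      refine if_congr ?_ rfl rfl
      simp only [Option.some_inj, eq_self_iff_true, true_and]
      exact hCiff r
    rw [hE, hfa, invL_cons]
    split_ifs <;> ring
  · have hzero : ∀ ρ' ∈ permutations'Aux n r, ((fa ltP a) ∘ (List.cons y)) ρ' = 0 := by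
      intro ρ' _
      simp only [Function.comp_apply]
      unfold fa
      rw [if_neg]
      rintro ⟨h1, -⟩
      rw [List.head?_cons, Option.some_inj] at h1
      exact hya h1
    have hfa0 : fa ltP a (y :: r) = 0 := by
      unfold fa
      rw [if_neg]
      rintro ⟨h1, -⟩
      rw [List.head?_cons, Option.some_inj] at h1
      exact hya h1
    rw [List.map_congr_left hzero, hfa0, mul_zero]
    simp
end inner

section main
set_option linter.unusedSectionVars false

theorem mainlem : ∀ (n : ℕ), 1 ≤ n → ∀ (ltP : ℕ → ℕ → Prop) [DecidableRel ltP], Ax ltP n →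
    ∀ a, 1 ≤ a → a ≤ n →
    ((((List.range' 1 n).reverse).permutations').map (fa ltP a)).sum
      = (X : Polynomial ℚ) ^ (a - 1) * ∏ i ∈ Finset.Icc 2 n,
          tnum ℚ (((Finset.Ico 1 i).filter fun j => ¬ ltP j i ∧ ¬ ltP i j).card) := by
  intro n
  induction n with
  | zero => omega
  | succ m IH =>
    intro hn ltP instD A a ha1 ha2
    rcases Nat.eq_zero_or_pos m with rfl | hm
    · -- n = 1
      have ha : a = 1 := by omega
      subst ha
      have h1 : (List.range' 1 1).reverse = [1] := rfl
      rw [h1]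
      have h2 : ([1] : List ℕ).permutations' = [[1]] := rfl
      rw [h2]
      simp only [List.map_cons, List.map_nil, List.sum_cons, List.sum_nil, add_zero]
      unfold fa
      rw [if_pos ⟨rfl, by rw [cond_cons]; exact ⟨not_ltP_zero A 1, Or.inl rfl, trivial⟩⟩]
      rw [show Finset.Icc 2 1 = ∅ from Finset.Icc_eq_empty (by omega)]
      simp [invL]
    · -- m ≥ 1
      have hrev : (List.range' 1 (m+1)).reverse = (m+1) :: (List.range' 1 m).reverse := by
        rw [List.range'_concat]
        simp
        omega
      rw [hrev]
      rw [show ((m+1) :: (List.range' 1 m).reverse).permutations'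
          = ((List.range' 1 m).reverse.permutations').flatMap (permutations'Aux (m+1)) from rfl]
      rw [sum_map_flatMap]
      have hmem : ∀ τ ∈ (List.range' 1 m).reverse.permutations',
          (∀ z ∈ τ, 1 ≤ z ∧ z < m+1) ∧ τ ≠ [] ∧ ((m+1) ∉ τ) ∧ τ ~ List.range' 1 m := by
        intro τ hτ
        have hp : τ ~ (List.range' 1 m).reverse := mem_permutations'.1 hτ
        have hp2 : τ ~ List.range' 1 m := hp.trans (List.reverse_perm _)
        have hz : ∀ z ∈ τ, 1 ≤ z ∧ z < m+1 := by
          intro z hz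
          have := hp2.mem_iff.1 hz
          rw [List.mem_range'_1] at this
          omega
        refine ⟨hz, ?_, ?_, hp2⟩
        · intro he
          have := hp2.length_eq
          rw [he] at this
          simp at this
          omega
        · intro hmem1
          have := (hz _ hmem1).2
          omega
      have hb_le : ((Finset.Ico 1 (m+1)).filter (fun j => ¬ ltP j (m+1))).card ≤ m := by
        have := card_B_le (ltP := ltP) (n := m+1) (by omega)
        simpa using this
      have hbm_all : ∀ τ ∈ (List.range' 1 m).reverse.permutations',
          bm ltP (m+1) τ = ((Finset.Ico 1 (m+1)).filter (fun j => ¬ ltP j (m+1))).card := by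
        intro τ hτ
        obtain ⟨-, -, -, hp2⟩ := hmem τ hτ
        unfold bm
        rw [hp2.countP_eq, countP_range' _ m]
        congr 1
        apply Finset.filter_congr
        intro j hj
        simp only [Finset.mem_Ico] at hj
        simp only [decide_eq_true_eq]
        constructor
        · tauto
        · intro h
          exact ⟨by omega, h⟩
      have A' := Ax_res A
      have hbth : ∀ i ∈ Finset.Icc 2 m,
          tnum ℚ (((Finset.Ico 1 i).filter fun j =>
            ¬ res ltP (m+1) j i ∧ ¬ res ltP (m+1) i j).card)
          = tnum ℚ (((Finset.Ico 1 i).filter fun j => ¬ ltP j i ∧ ¬ ltP i j).card) := by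
        intro i hi
        simp only [Finset.mem_Icc] at hi
        congr 2
        apply Finset.filter_congr
        intro j hj
        simp only [Finset.mem_Ico] at hj
        have hi' : i ≠ m+1 := by omega
        have hj' : j ≠ m+1 := by omega
        simp only [res]
        constructor
        · rintro ⟨h1, h2⟩
          exact ⟨fun hh => h1 ⟨hh, hi'⟩, fun hh => h2 ⟨hh, hj'⟩⟩
        · rintro ⟨h1, h2⟩
          exact ⟨fun hh => h1 hh.1, fun hh => h2 hh.1⟩
      have hIH : ∀ a', 1 ≤ a' → a' ≤ m →
          (((List.range' 1 m).reverse.permutations').map (fa ltP a')).sum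
            = (X : Polynomial ℚ) ^ (a' - 1) * ∏ i ∈ Finset.Icc 2 m,
              tnum ℚ (((Finset.Ico 1 i).filter fun j => ¬ ltP j i ∧ ¬ ltP i j).card) := by
        intro a' h1 h2
        have hIH0 := IH hm (res ltP (m+1)) A' a' h1 h2
        rw [← Finset.prod_congr rfl hbth, ← hIH0]
        apply congrArg
        apply List.map_congr_left
        intro τ hτ
        obtain ⟨-, -, hnot, -⟩ := hmem τ hτ
        exact (fa_res (by omega) a' τ hnot).symm
      have hsplit : ∏ i ∈ Finset.Icc 2 (m+1),
            tnum ℚ (((Finset.Ico 1 i).filter fun j => ¬ ltP j i ∧ ¬ ltP i j).card)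
          = (∏ i ∈ Finset.Icc 2 m,
              tnum ℚ (((Finset.Ico 1 i).filter fun j => ¬ ltP j i ∧ ¬ ltP i j).card))
            * tnum ℚ (((Finset.Ico 1 (m+1)).filter fun j =>
                ¬ ltP j (m+1) ∧ ¬ ltP (m+1) j).card) :=
        Finset.prod_Icc_succ_top (by omega) _
      have hbthn : ((Finset.Ico 1 (m+1)).filter fun j => ¬ ltP j (m+1) ∧ ¬ ltP (m+1) j).card
          = ((Finset.Ico 1 (m+1)).filter (fun j => ¬ ltP j (m+1))).card := by
        congr 1
        apply Finset.filter_congr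
        intro j hj
        simp only [Finset.mem_Ico] at hj
        have h2 : ¬ ltP (m+1) j := not_ltP_of_le A (by omega)
        tauto
      by_cases hA : a = m + 1
      · subst hA
        have hstep : ∀ τ ∈ (List.range' 1 m).reverse.permutations',
            ((permutations'Aux (m+1) τ).map (fa ltP (m+1))).sum
              = (X : Polynomial ℚ) ^
                  ((Finset.Ico 1 (m+1)).filter (fun j => ¬ ltP j (m+1))).card *
                ∑ a' ∈ (Finset.Ico 1 (m+1)).filter (fun j => ¬ ltP j (m+1)),
                  fa ltP a' τ := by
          intro τ hτ
          obtain ⟨hz, hne, -, -⟩ := hmem τ hτ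
          rw [inner_top A τ hz hne, hbm_all τ hτ]
        rw [List.map_congr_left hstep, sum_map_mul_left', list_sum_finset_sum]
        have hsum2 : ∑ a' ∈ (Finset.Ico 1 (m+1)).filter (fun j => ¬ ltP j (m+1)),
            (((List.range' 1 m).reverse.permutations').map (fa ltP a')).sum
            = (X : Polynomial ℚ) ^
                (m - ((Finset.Ico 1 (m+1)).filter (fun j => ¬ ltP j (m+1))).card)
              * tnum ℚ ((Finset.Ico 1 (m+1)).filter (fun j => ¬ ltP j (m+1))).card
              * ∏ i ∈ Finset.Icc 2 m,
                  tnum ℚ (((Finset.Ico 1 i).filter fun j => ¬ ltP j i ∧ ¬ ltP i j).card) := by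
          have hBs := Bsum A (n := m+1) (by omega)
          have : ∀ a' ∈ (Finset.Ico 1 (m+1)).filter (fun j => ¬ ltP j (m+1)),
              (((List.range' 1 m).reverse.permutations').map (fa ltP a')).sum
              = (X : Polynomial ℚ) ^ (a' - 1) * ∏ i ∈ Finset.Icc 2 m,
                  tnum ℚ (((Finset.Ico 1 i).filter fun j => ¬ ltP j i ∧ ¬ ltP i j).card) := by
            intro a' ha'
            simp only [Finset.mem_filter, Finset.mem_Ico] at ha'
            exact hIH a' ha'.1.1 (by omega)
          rw [Finset.sum_congr rfl this, ← Finset.sum_mul, hBs]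
          simp only [Nat.add_sub_cancel]
        rw [hsum2, hsplit, hbthn]
        have hpow : (X : Polynomial ℚ) ^
              ((Finset.Ico 1 (m+1)).filter (fun j => ¬ ltP j (m+1))).card
            * (X : Polynomial ℚ) ^
              (m - ((Finset.Ico 1 (m+1)).filter (fun j => ¬ ltP j (m+1))).card)
            = (X : Polynomial ℚ) ^ m := by
          rw [← pow_add]
          congr 1
          omega
        calc _ = ((X : Polynomial ℚ) ^
              ((Finset.Ico 1 (m+1)).filter (fun j => ¬ ltP j (m+1))).card
            * (X : Polynomial ℚ) ^
              (m - ((Finset.Ico 1 (m+1)).filter (fun j => ¬ ltP j (m+1))).card))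
            * tnum ℚ ((Finset.Ico 1 (m+1)).filter (fun j => ¬ ltP j (m+1))).card
            * ∏ i ∈ Finset.Icc 2 m,
                tnum ℚ (((Finset.Ico 1 i).filter fun j => ¬ ltP j i ∧ ¬ ltP i j).card) := by
              ring
        _ = _ := by
              rw [hpow]
              simp only [Nat.add_sub_cancel]
              ring
      · have haa : a ≤ m := by omega
        have hstep : ∀ τ ∈ (List.range' 1 m).reverse.permutations',
            ((permutations'Aux (m+1) τ).map (fa ltP a)).sum
              = tnum ℚ ((Finset.Ico 1 (m+1)).filter (fun j => ¬ ltP j (m+1))).card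
                * fa ltP a τ := by
          intro τ hτ
          obtain ⟨hz, hne, -, -⟩ := hmem τ hτ
          rw [inner_low A a ha1 (by omega) τ hz hne, hbm_all τ hτ]
        rw [List.map_congr_left hstep, sum_map_mul_left', hIH a ha1 haa, hsplit, hbthn]
        ring
end main

section idx
set_option linter.unusedSectionVars false
variable {ltP : ℕ → ℕ → Prop} [DecidableRel ltP] {n : ℕ}

lemma cond_idx : ∀ (w : List ℕ) (S : Finset ℕ) (c : ℕ),
    Cond ltP S c w ↔
      ((∀ hd, w.head? = some hd → ¬ ltP hd c ∧ (S = ∅ ∨ ∃ u ∈ S, ¬ ltP u hd)) ∧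
       (∀ i : ℕ, i + 1 < w.length → ¬ ltP (w.getD (i+1) 0) (w.getD i 0)) ∧
       (∀ r : ℕ, 0 < r → r < w.length →
         ∃ x, (x ∈ S ∨ ∃ s, s < r ∧ w.getD s 0 = x) ∧ ¬ ltP x (w.getD r 0)))
  | [], S, c => by
      simp only [cond_nil, List.head?_nil, List.length_nil, true_iff]
      refine ⟨fun hd h => by simp at h, fun i hi => by omega, fun r hr hr' => by omega⟩
  | y :: v, S, c => by
      rw [cond_cons, cond_idx v (insert y S) y]
      constructor
      · rintro ⟨h1, h2, hH1, hH2, hH3⟩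
        refine ⟨?_, ?_, ?_⟩
        · intro hd hhd
          rw [List.head?_cons, Option.some_inj] at hhd
          subst hhd
          exact ⟨h1, h2⟩
        · intro i hi
          match i with
          | 0 =>
              simp only [List.length_cons] at hi
              match v, hi with
              | z :: v', _ =>
                simp only [List.getD_cons_succ, List.getD_cons_zero]
                exact (hH1 z rfl).1
          | i + 1 =>
              simp only [List.length_cons] at hi
              simp only [List.getD_cons_succ]
              exact hH2 i (by omega)
        · intro r hr hrl
          simp only [List.length_cons] at hrl
          match r, hr with
          | 1, _ =>
              match v, hrl with
              | z :: v', _ =>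
                simp only [List.getD_cons_succ, List.getD_cons_zero]
                rcases (hH1 z rfl).2 with hbad | ⟨u, hu, hun⟩
                · exact absurd hbad (Finset.insert_ne_empty _ _)
                · rcases Finset.mem_insert.1 hu with he | hu2
                  · exact ⟨u, Or.inr ⟨0, by omega, by rw [List.getD_cons_zero, he]⟩, hun⟩
                  · exact ⟨u, Or.inl hu2, hun⟩
          | r' + 2, _ =>
              obtain ⟨x, hx, hxw⟩ := hH3 (r' + 1) (by omega) (by omega)
              simp only [List.getD_cons_succ]
              refine ⟨x, ?_, hxw⟩
              rcases hx with hx | ⟨s, hs, hsx⟩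
              · rcases Finset.mem_insert.1 hx with he | hx2
                · exact Or.inr ⟨0, by omega, by rw [List.getD_cons_zero, he]⟩
                · exact Or.inl hx2
              · exact Or.inr ⟨s + 1, by omega, by simpa [List.getD_cons_succ] using hsx⟩
      · rintro ⟨G1, G2, G3⟩
        obtain ⟨h1, h2⟩ := G1 y rfl
        refine ⟨h1, h2, ?_, ?_, ?_⟩
        · intro hd hhd
          match v, hhd with
          | z :: v', hhd =>
            rw [List.head?_cons, Option.some_inj] at hhd
            subst hhd
            constructor
            · have := G2 0 (by simp)
              simpa using this
            · right
              obtain ⟨x, hx, hxw⟩ := G3 1 (by omega) (by simp)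
              rcases hx with hx | ⟨s, hs, hsx⟩
              · exact ⟨x, Finset.mem_insert_of_mem hx, by simpa using hxw⟩
              · have hs0 : s = 0 := by omega
                subst hs0
                simp only [List.getD_cons_zero] at hsx
                subst hsx
                exact ⟨y, Finset.mem_insert_self _ _, by simpa using hxw⟩
        · intro i hi
          have := G2 (i + 1) (by simp only [List.length_cons]; omega)
          simpa using this
        · intro r hr hrl
          obtain ⟨x, hx, hxw⟩ := G3 (r + 1) (by omega) (by simp only [List.length_cons]; omega)
          simp only [List.getD_cons_succ] at hxw
          refine ⟨x, ?_, hxw⟩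
          rcases hx with hx | ⟨s, hs, hsx⟩
          · exact Or.inl (Finset.mem_insert_of_mem hx)
          · match s, hsx with
            | 0, hsx =>
                simp only [List.getD_cons_zero] at hsx
                subst hsx
                exact Or.inl (Finset.mem_insert_self _ _)
            | s' + 1, hsx =>
                simp only [List.getD_cons_succ] at hsx
                exact Or.inr ⟨s', by omega, hsx⟩

lemma cond_iff_theorem (A : Ax ltP n) (w : List ℕ) (hw : w.length = n) :
    Cond ltP ∅ 0 w ↔
      ((∀ i ∈ Finset.range (n - 1), ¬ ltP (w.getD (i+1) 0) (w.getD i 0)) ∧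
       (∀ r ∈ Finset.range n, 1 ≤ r →
          ¬ ∀ s ∈ Finset.range r, ltP (w.getD s 0) (w.getD r 0))) := by
  rw [cond_idx]
  constructor
  · rintro ⟨-, h2, h3⟩
    constructor
    · intro i hi
      rw [Finset.mem_range] at hi
      exact h2 i (by omega)
    · intro r hr hr1 hall
      rw [Finset.mem_range] at hr
      obtain ⟨x, hx, hxw⟩ := h3 r (by omega) (by omega)
      rcases hx with hx | ⟨s, hs, hsx⟩
      · simp at hx
      · subst hsx
        exact hxw (hall s (Finset.mem_range.2 hs))
  · rintro ⟨h2, h3⟩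
    refine ⟨?_, ?_, ?_⟩
    · intro hd _
      exact ⟨not_ltP_zero A hd, Or.inl rfl⟩
    · intro i hi
      exact h2 i (Finset.mem_range.2 (by omega))
    · intro r hr hrl
      have := h3 r (Finset.mem_range.2 (by omega)) (by omega)
      push_neg at this
      obtain ⟨s, hs, hsw⟩ := this
      rw [Finset.mem_range] at hs
      exact ⟨w.getD s 0, Or.inr ⟨s, hs, rfl⟩, hsw⟩

lemma countP_idx (p : ℕ → Bool) : ∀ w : List ℕ,
    w.countP p = ∑ j ∈ Finset.range w.length, (if p (w.getD j 0) = true then 1 else 0)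
  | [] => by simp
  | y :: v => by
      rw [List.countP_cons, countP_idx p v, List.length_cons, Finset.sum_range_succ']
      simp only [List.getD_cons_succ, List.getD_cons_zero]

lemma invL_idx : ∀ w : List ℕ,
    invL ltP w = ∑ i ∈ Finset.range w.length, ∑ j ∈ Finset.range w.length,
      (if i < j ∧ w.getD j 0 < w.getD i 0 ∧ ¬ ltP (w.getD j 0) (w.getD i 0) then 1 else 0)
  | [] => by simp
  | y :: v => by
      rw [invL_cons, invL_idx v, List.length_cons, Finset.sum_range_succ']
      have hout : ∑ j ∈ Finset.range (v.length + 1),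
          (if 0 < j ∧ (y::v).getD j 0 < (y::v).getD 0 0 ∧
            ¬ ltP ((y::v).getD j 0) ((y::v).getD 0 0) then 1 else 0)
          = v.countP fun z => decide (z < y ∧ ¬ ltP z y) := by
        rw [Finset.sum_range_succ', countP_idx]
        simp only [List.getD_cons_succ, List.getD_cons_zero]
        have : (if 0 < 0 ∧ y < y ∧ ¬ ltP y y then 1 else 0) = 0 := by
          simp
        rw [this, add_zero]
        apply Finset.sum_congr rfl
        intro j _
        congr 1
        rw [eq_iff_iff]
        simp only [decide_eq_true_eq]
        constructor
        · rintro ⟨-, h1, h2⟩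
          exact ⟨h1, h2⟩
        · rintro ⟨h1, h2⟩
          exact ⟨by omega, h1, h2⟩
      have hin : ∀ i ∈ Finset.range v.length,
          (∑ j ∈ Finset.range (v.length + 1),
            (if i + 1 < j ∧ (y::v).getD j 0 < (y::v).getD (i+1) 0 ∧
              ¬ ltP ((y::v).getD j 0) ((y::v).getD (i+1) 0) then 1 else 0))
          = ∑ j ∈ Finset.range v.length,
            (if i < j ∧ v.getD j 0 < v.getD i 0 ∧ ¬ ltP (v.getD j 0) (v.getD i 0)
              then 1 else 0) := by
        intro i _
        rw [Finset.sum_range_succ']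
        simp only [List.getD_cons_succ, List.getD_cons_zero]
        have h0 : (if i + 1 < 0 ∧ y < v.getD i 0 ∧ ¬ ltP y (v.getD i 0) then 1 else 0) = 0 := by
          simp
        rw [h0, add_zero]
        apply Finset.sum_congr rfl
        intro j _
        congr 1
        rw [eq_iff_iff]
        constructor
        · rintro ⟨h1, h2⟩
          exact ⟨by omega, h2⟩
        · rintro ⟨h1, h2⟩
          exact ⟨by omega, h2⟩
      rw [Finset.sum_congr rfl hin, hout]
      ring
end idx

section total
set_option linter.unusedSectionVars false

lemma mainlem_total (n : ℕ) (hn : 1 ≤ n) (ltP : ℕ → ℕ → Prop) [DecidableRel ltP]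
    (A : Ax ltP n) :
    (((List.range' 1 n).reverse.permutations').map
      (fun l => if Cond ltP ∅ 0 l then (X : Polynomial ℚ) ^ invL ltP l else 0)).sum
    = tnum ℚ n * ∏ i ∈ Finset.Icc 2 n,
        tnum ℚ (((Finset.Ico 1 i).filter fun j => ¬ ltP j i ∧ ¬ ltP i j).card) := by
  have hpt : ∀ l ∈ (List.range' 1 n).reverse.permutations',
      (if Cond ltP ∅ 0 l then (X : Polynomial ℚ) ^ invL ltP l else 0)
        = ∑ a ∈ Finset.Icc 1 n, fa ltP a l := by
    intro l hl
    have hp : l ~ List.range' 1 n := (mem_permutations'.1 hl).trans (List.reverse_perm _)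
    have hne : l ≠ [] := by
      intro he
      have := hp.length_eq
      rw [he] at this
      simp only [List.length_nil, List.length_range'] at this
      omega
    obtain ⟨y, r, rfl⟩ := List.exists_cons_of_ne_nil hne
    have hy : y ∈ Finset.Icc 1 n := by
      have := hp.mem_iff.1 ((List.mem_cons_self (a := y) (l := r)))
      rw [List.mem_range'_1] at this
      simp only [Finset.mem_Icc]
      omega
    by_cases hc : Cond ltP ∅ 0 (y :: r)
    · rw [if_pos hc]
      have hcongr : ∀ a ∈ Finset.Icc 1 n, fa ltP a (y :: r)
          = (if a = y then (X : Polynomial ℚ) ^ invL ltP (y :: r) else 0) := by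
        intro a _
        unfold fa
        rw [List.head?_cons]
        by_cases h : a = y
        · subst h
          rw [if_pos rfl, if_pos ⟨rfl, hc⟩]
        · rw [if_neg h, if_neg]
          rintro ⟨h1, -⟩
          exact h (Option.some_inj.1 h1).symm
      rw [Finset.sum_congr rfl hcongr, Finset.sum_ite_eq' _ y _, if_pos hy]
    · rw [if_neg hc, Finset.sum_eq_zero]
      intro a _
      unfold fa
      rw [if_neg]
      rintro ⟨-, hco⟩
      exact hc hco
  rw [List.map_congr_left hpt, list_sum_finset_sum]
  have h2 : ∀ a ∈ Finset.Icc 1 n,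
      (((List.range' 1 n).reverse.permutations').map (fa ltP a)).sum
        = (X : Polynomial ℚ) ^ (a - 1) * ∏ i ∈ Finset.Icc 2 n,
            tnum ℚ (((Finset.Ico 1 i).filter fun j => ¬ ltP j i ∧ ¬ ltP i j).card) := by
    intro a ha
    simp only [Finset.mem_Icc] at ha
    exact mainlem n hn ltP A a ha.1 ha.2
  rw [Finset.sum_congr rfl h2, ← Finset.sum_mul]
  congr 1
  rw [← Finset.Ico_add_one_right_eq_Icc, Finset.sum_Ico_eq_sum_range]
  have hnn : n + 1 - 1 = n := by omega
  rw [hnn, tnum]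
  apply Finset.sum_congr rfl
  intro k _
  congr 1
  omega

def gword (n : ℕ) (σ : Equiv.Perm (Fin n)) : List ℕ := List.ofFn (fun i => (σ i).1 + 1)

lemma gword_length {n : ℕ} (σ : Equiv.Perm (Fin n)) : (gword n σ).length = n :=
  List.length_ofFn

lemma gword_getD {n : ℕ} (σ : Equiv.Perm (Fin n)) (i : ℕ) :
    (gword n σ).getD i 0 = word n σ i := by
  by_cases h : i < n
  · rw [word, dif_pos h, gword,
      List.getD_eq_getElem _ _ (by rw [List.length_ofFn]; exact h), List.getElem_ofFn]
  · rw [word, dif_neg h, gword, List.getD_eq_default _ _ (by rw [List.length_ofFn]; omega)]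

lemma gword_inj {n : ℕ} : Function.Injective (gword n) := by
  intro σ τ h
  have h2 := List.ofFn_injective h
  apply Equiv.ext
  intro i
  have := congrFun h2 i
  exact Fin.ext (by omega)

lemma gword_perm {n : ℕ} (σ : Equiv.Perm (Fin n)) : gword n σ ~ List.range' 1 n := by
  apply List.perm_of_nodup_nodup_toFinset_eq
  · rw [gword, List.ofFn_eq_map]
    apply List.Nodup.map _ (List.nodup_finRange n)
    intro i j hij
    simp only at hij
    have : (σ i : ℕ) = (σ j : ℕ) := by omega
    exact σ.injective (Fin.val_injective this)
  · exact List.nodup_range'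
  · ext x
    rw [List.mem_toFinset, List.mem_toFinset, gword, List.ofFn_eq_map]
    simp only [List.mem_map, List.mem_finRange, true_and, List.mem_range'_1]
    constructor
    · rintro ⟨i, rfl⟩
      have := (σ i).2
      omega
    · rintro ⟨h1, h2⟩
      refine ⟨σ.symm ⟨x - 1, by omega⟩, ?_⟩
      rw [Equiv.apply_symm_apply]
      simp only
      omega

end total

end NP

open Polynomial List in
/-- For a natural unit interval order `P` on `[n]` (n ≥ 1) with incomparability graph `G`:
`∑_{σ ∈ N_P} t^{inv_G(σ)} = [n]_t · ∏_{i=2}^n [b_i]_t`, where `N_P` is the set of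
permutations (as words) with no `P`-descent and no nontrivial left-to-right `P`-maximum,
and `b_i = #{j < i : {j,i} ∈ E}`. -/
theorem sum_NP_eq_prod (n : ℕ) (hn : 1 ≤ n) (ltP : ℕ → ℕ → Prop) [DecidableRel ltP]
    (hmem : ∀ x y, ltP x y → x ∈ Finset.Icc 1 n ∧ y ∈ Finset.Icc 1 n)
    (htrans : ∀ x y z, ltP x y → ltP y z → ltP x z)
    (hnat : ∀ x y, ltP x y → x < y)
    (hnuio : ∀ x y z, x ∈ Finset.Icc 1 n → y ∈ Finset.Icc 1 n → z ∈ Finset.Icc 1 n →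
      y ≠ x → y ≠ z → ltP x z →
      ¬ ltP x y → ¬ ltP y x → ¬ ltP y z → ¬ ltP z y → x < y ∧ y < z) :
    ∑ σ : Equiv.Perm (Fin n),
      (if (∀ i ∈ Finset.range (n - 1), ¬ ltP (word n σ (i + 1)) (word n σ i)) ∧
          (∀ r ∈ Finset.range n, 1 ≤ r →
            ¬ ∀ s ∈ Finset.range r, ltP (word n σ s) (word n σ r))
       then (Polynomial.X : Polynomial ℚ) ^ invG n ltP σ else 0)
    = tnum ℚ n * ∏ i ∈ Finset.Icc 2 n,
        tnum ℚ (((Finset.Ico 1 i).filter fun j => ¬ ltP j i ∧ ¬ ltP i j).card) := by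
  have A : NP.Ax ltP n := ⟨hmem, htrans, hnat, hnuio⟩
  have hsummand : ∀ σ : Equiv.Perm (Fin n),
      (if (∀ i ∈ Finset.range (n - 1), ¬ ltP (word n σ (i + 1)) (word n σ i)) ∧
          (∀ r ∈ Finset.range n, 1 ≤ r →
            ¬ ∀ s ∈ Finset.range r, ltP (word n σ s) (word n σ r))
       then (Polynomial.X : Polynomial ℚ) ^ invG n ltP σ else 0)
      = (if NP.Cond ltP ∅ 0 (NP.gword n σ) then
          (Polynomial.X : Polynomial ℚ) ^ NP.invL ltP (NP.gword n σ) else 0) := by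
    intro σ
    have hcond := NP.cond_iff_theorem A (NP.gword n σ) (NP.gword_length σ)
    simp only [NP.gword_getD] at hcond
    have hinv : NP.invL ltP (NP.gword n σ) = invG n ltP σ := by
      rw [NP.invL_idx, NP.gword_length, invG, Finset.card_filter, Finset.sum_product]
      apply Finset.sum_congr rfl
      intro i _
      apply Finset.sum_congr rfl
      intro j _
      simp only [NP.gword_getD]
      congr 1
      rw [eq_iff_iff]
      constructor
      · rintro ⟨h1, h2, h3⟩
        exact ⟨h1, h2, NP.not_ltP_of_le A (le_of_lt h2), h3⟩
      · rintro ⟨h1, h2, -, h4⟩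
        exact ⟨h1, h2, h4⟩
    rw [hinv]
    exact (if_congr hcond rfl rfl).symm
  rw [Finset.sum_congr rfl (fun σ _ => hsummand σ)]
  have hnodupL : ((List.range' 1 n).reverse.permutations').Nodup := by
    have h0 := List.nodup_permutations ((List.range' 1 n).reverse)
      (List.nodup_reverse.2 (List.nodup_range'))
    exact ((List.permutations_perm_permutations' _).nodup_iff).1 h0
  have himg : Finset.univ.image (NP.gword n)
      = ((List.range' 1 n).reverse.permutations').toFinset := by
    apply Finset.eq_of_subset_of_card_le
    · intro l hl
      rw [Finset.mem_image] at hl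
      obtain ⟨σ, -, rfl⟩ := hl
      rw [List.mem_toFinset, mem_permutations']
      exact (NP.gword_perm σ).trans (List.reverse_perm _).symm
    · rw [List.toFinset_card_of_nodup hnodupL,
        Finset.card_image_of_injective _ NP.gword_inj, Finset.card_univ, Fintype.card_perm,
        Fintype.card_fin]
      have hlen : ((List.range' 1 n).reverse.permutations').length = n.factorial := by
        rw [← (List.permutations_perm_permutations' _).length_eq, List.length_permutations]
        simp [List.length_range']
      rw [hlen]
  rw [show (∑ σ : Equiv.Perm (Fin n),
        (if NP.Cond ltP ∅ 0 (NP.gword n σ) then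
          (Polynomial.X : Polynomial ℚ) ^ NP.invL ltP (NP.gword n σ) else 0))
      = ∑ l ∈ Finset.univ.image (NP.gword n),
        (if NP.Cond ltP ∅ 0 l then (Polynomial.X : Polynomial ℚ) ^ NP.invL ltP l else 0) from
    (Finset.sum_image
      (f := fun l => if NP.Cond ltP ∅ 0 l then (Polynomial.X : Polynomial ℚ) ^ NP.invL ltP l else 0)
      (g := NP.gword n) (fun x _ y _ h => NP.gword_inj h)).symm]
  rw [himg, List.sum_toFinset _ hnodupL]
  exact NP.mainlem_total n hn ltP A
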